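/- For 0 < α ≤ 1/2, the function g(z) = |z^α − 1|^{1/α} + z^α/α − z, defined for z > 0, attains its maximum value 1/α − 1 at z = 1. -/

import Mathlib

open Real Set
open scoped NNReal

private lemma rpow_superadd {x p : ℝ} (hx : 0 ≤ x) (hp : 1 ≤ p) :
    x ^ p + 1 ≤ (x + 1) ^ p := by
  have h := NNReal.add_rpow_le_rpow_add (Real.toNNReal x) 1 hp
  have := (NNReal.coe_le_coe).2 h
  simpa [NNReal.coe_rpow, hx] using this

private lemma aux1 {p : ℝ} (hp : 2 ≤ p) {a : ℝ} (ha : 0 ≤ a) :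
    a ^ p + p * a + 1 ≤ (a + 1) ^ p := by
  set f : ℝ → ℝ := fun a => (a + 1) ^ p - a ^ p - p * a - 1 with hf
  have hcont : ContinuousOn f (Ici 0) := by
    apply ContinuousOn.sub
    apply ContinuousOn.sub
    apply ContinuousOn.sub
    · exact ((continuous_id.add continuous_const).rpow_const
        (fun x => Or.inr (by linarith))).continuousOn
    · exact (continuous_id.rpow_const (fun x => Or.inr (by linarith))).continuousOn
    · exact (continuous_const.mul continuous_id).continuousOn
    · exact continuousOn_const
  have hderiv : ∀ x ∈ interior (Ici (0:ℝ)),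
      HasDerivAt f (p * (x + 1) ^ (p - 1) - p * x ^ (p - 1) - p) x := by
    intro x hx
    rw [interior_Ici] at hx
    have h1 : HasDerivAt (fun x : ℝ => (x + 1) ^ p) (1 * p * (x + 1) ^ (p - 1)) x :=
      ((hasDerivAt_id x).add_const 1).rpow_const (Or.inr (by linarith))
    have h2 : HasDerivAt (fun x : ℝ => x ^ p) (1 * p * x ^ (p - 1)) x :=
      (hasDerivAt_id x).rpow_const (Or.inr (by linarith))
    have h3 : HasDerivAt (fun x : ℝ => p * x) p x := by
      simpa using (hasDerivAt_id x).const_mul p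
    have := ((h1.sub h2).sub h3).sub_const 1
    exact this.congr_deriv (by ring)
  have hmono : MonotoneOn f (Ici 0) := by
    apply monotoneOn_of_deriv_nonneg (convex_Ici 0) hcont
    · intro x hx
      exact (hderiv x hx).differentiableAt.differentiableWithinAt
    · intro x hx
      rw [(hderiv x hx).deriv]
      rw [interior_Ici] at hx
      have key : x ^ (p - 1) + 1 ≤ (x + 1) ^ (p - 1) :=
        rpow_superadd (le_of_lt hx) (by linarith)
      have hp0 : (0:ℝ) < p := by linarith
      nlinarith [key]
  have h0 : f 0 = 0 := by
    simp [hf, Real.zero_rpow (by positivity : p ≠ 0)]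
  have := hmono (self_mem_Ici) ha ha
  rw [h0] at this
  simp only [hf] at this
  linarith

private lemma aux2 {p : ℝ} (hp : 2 ≤ p) {t : ℝ} (ht : 0 ≤ t) (ht1 : t ≤ 1) :
    (1 - t) ^ p + p * t ≤ t ^ p + p - 1 := by
  set f : ℝ → ℝ := fun t => t ^ p + p - 1 - p * t - (1 - t) ^ p with hf
  have hcont : ContinuousOn f (Icc 0 1) := by
    apply ContinuousOn.sub
    apply ContinuousOn.sub
    · exact ((continuous_id.rpow_const fun x => Or.inr (by linarith)).add
        continuous_const).sub continuous_const |>.continuousOn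
    · exact (continuous_const.mul continuous_id).continuousOn
    · exact ((continuous_const.sub continuous_id).rpow_const
        (fun x => Or.inr (by linarith))).continuousOn
  have hderiv : ∀ x ∈ interior (Icc (0:ℝ) 1),
      HasDerivAt f (p * x ^ (p - 1) - p + p * (1 - x) ^ (p - 1)) x := by
    intro x hx
    rw [interior_Icc] at hx
    have h1 : HasDerivAt (fun x : ℝ => x ^ p) (1 * p * x ^ (p - 1)) x :=
      (hasDerivAt_id x).rpow_const (Or.inr (by linarith))
    have h2 : HasDerivAt (fun x : ℝ => p * x) p x := by
      simpa using (hasDerivAt_id x).const_mul p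
    have h3 : HasDerivAt (fun x : ℝ => (1 - x) ^ p) ((-1) * p * (1 - x) ^ (p - 1)) x :=
      ((hasDerivAt_id x).const_sub 1).rpow_const (Or.inr (by linarith))
    have := (((h1.add_const p).sub_const 1).sub h2).sub h3
    exact this.congr_deriv (by ring)
  have hanti : AntitoneOn f (Icc 0 1) := by
    apply antitoneOn_of_deriv_nonpos (convex_Icc 0 1) hcont
    · intro x hx
      exact (hderiv x hx).differentiableAt.differentiableWithinAt
    · intro x hx
      rw [(hderiv x hx).deriv]
      rw [interior_Icc] at hx
      have hx0 : 0 < x := hx.1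
      have hx1 : x < 1 := hx.2
      have k1 : x ^ (p - 1) ≤ x := by
        have := Real.rpow_le_rpow_of_exponent_ge hx0 (le_of_lt hx1)
          (by linarith : (1:ℝ) ≤ p - 1)
        simpa using this
      have k2 : (1 - x) ^ (p - 1) ≤ 1 - x := by
        have := Real.rpow_le_rpow_of_exponent_ge (by linarith : (0:ℝ) < 1 - x)
          (by linarith) (by linarith : (1:ℝ) ≤ p - 1)
        simpa using this
      nlinarith
  have key := hanti ⟨ht, ht1⟩ (right_mem_Icc.2 zero_le_one) ht1
  have h1 : f 1 = 0 := by
    simp [hf, Real.zero_rpow (by positivity : p ≠ 0)]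
  rw [h1] at key
  simp only [hf] at key
  linarith

/-- For `0 < α ≤ 1/2`, the function `g(z) = |z^α − 1|^{1/α} + z^α/α − z` on `(0,∞)`
attains its maximum value `1/α − 1` at `z = 1`. -/
theorem stmt_1 (α : ℝ) (hα : 0 < α) (hα2 : α ≤ 1/2)
    (g : ℝ → ℝ) (hg : g = fun z => |z ^ α - 1| ^ (1/α) + z ^ α / α - z) :
    g 1 = 1/α - 1 ∧ ∀ z > 0, g z ≤ 1/α - 1 := by
  have hp : (2:ℝ) ≤ 1/α := by
    rw [le_div_iff₀ hα]; linarith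
  constructor
  · simp [hg, Real.one_rpow, Real.zero_rpow (by positivity : 1/α ≠ 0), Real.zero_rpow (by positivity : α⁻¹ ≠ 0)]
  · intro z hz
    set p := 1/α with hpdef
    set t := z ^ α with htdef
    have ht : 0 < t := Real.rpow_pos_of_pos hz α
    have htp : t ^ p = z := by
      rw [htdef, hpdef, ← Real.rpow_mul hz.le, mul_one_div_cancel hα.ne', Real.rpow_one]
    have hgz : g z = |t - 1| ^ p + p * t - t ^ p := by
      rw [hg, htp]
      simp only [htdef]
      rw [div_eq_mul_one_div, hpdef]
      ring_nf
    rw [hgz]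
    rcases le_or_gt 1 t with h1 | h1
    · have habs : |t - 1| = t - 1 := abs_of_nonneg (by linarith)
      have := aux1 hp (by linarith : (0:ℝ) ≤ t - 1)
      rw [show t - 1 + 1 = t by ring] at this
      rw [habs]
      linarith
    · have habs : |t - 1| = 1 - t := by
        rw [abs_of_nonpos (by linarith)]; ring
      have := aux2 hp ht.le h1.le
      rw [habs]
      linarith
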